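/- For a faithful density matrix π and any Hermitian A, the arithmetic mean dominates the logarithmic mean: Tr[A·(Aπ+πA)/2] ≥ Tr[A ∫₀¹ π^s A π^{1-s} ds] ≥ 0. -/

import Mathlib

open Matrix MeasureTheory ComplexOrder intervalIntegral

/-- `mpow π hπ s` is the matrix power `π ^ s` for `s : ℝ`, defined via the spectral
decomposition of the Hermitian matrix `π`. -/
noncomputable def mpow {n : ℕ} (π : Matrix (Fin n) (Fin n) ℂ) (hπ : π.IsHermitian) (s : ℝ) :
    Matrix (Fin n) (Fin n) ℂ :=
  (hπ.eigenvectorUnitary : Matrix (Fin n) (Fin n) ℂ) *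
    Matrix.diagonal (fun i => ((hπ.eigenvalues i ^ s : ℝ) : ℂ)) *
    star (hπ.eigenvectorUnitary : Matrix (Fin n) (Fin n) ℂ)

/-- The logarithmic matrix mean `𝕁(B) = ∫₀¹ π^s B π^{1-s} ds`, defined entrywise. -/
noncomputable def Jmean {n : ℕ} (π : Matrix (Fin n) (Fin n) ℂ) (hπ : π.IsHermitian)
    (B : Matrix (Fin n) (Fin n) ℂ) : Matrix (Fin n) (Fin n) ℂ :=
  Matrix.of fun i j => ∫ s in (0:ℝ)..1, (mpow π hπ s * B * mpow π hπ (1 - s)) i j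

lemma contRpowMul {a b : ℝ} (ha : 0 < a) (hb : 0 < b) :
    Continuous fun s : ℝ => a ^ s * b ^ (1 - s) :=
  (continuous_const.rpow continuous_id fun _ => Or.inl ha.ne').mul
    (continuous_const.rpow (continuous_const.sub continuous_id) fun _ => Or.inl hb.ne')

lemma logMeanLe {a b : ℝ} (ha : 0 < a) (hb : 0 < b) :
    ∫ s in (0:ℝ)..1, a ^ s * b ^ (1 - s) ≤ (a + b) / 2 := by
  have hval : (∫ s in (0:ℝ)..1, (s * a + (1 - s) * b)) = (a + b) / 2 := by
    have h0 : (fun s : ℝ => s * a + (1 - s) * b) = fun s => (a - b) * s + b := by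
      funext s; ring
    rw [h0, intervalIntegral.integral_add
      (((by fun_prop : Continuous fun s : ℝ => (a - b) * s)).intervalIntegrable _ _)
      intervalIntegrable_const, intervalIntegral.integral_const_mul,
      integral_id, intervalIntegral.integral_const]
    norm_num; ring
  calc (∫ s in (0:ℝ)..1, a ^ s * b ^ (1 - s)) ≤ ∫ s in (0:ℝ)..1, (s * a + (1 - s) * b) := by
        apply intervalIntegral.integral_mono_on (by norm_num)
          ((contRpowMul ha hb).intervalIntegrable _ _)
          ((by fun_prop : Continuous fun s : ℝ => s * a + (1 - s) * b).intervalIntegrable _ _)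
        intro s hs
        exact Real.geom_mean_le_arith_mean2_weighted hs.1 (by linarith [hs.2]) ha.le hb.le
          (by ring)
    _ = (a + b) / 2 := hval

lemma logMeanNonneg {a b : ℝ} (ha : 0 < a) (hb : 0 < b) :
    0 ≤ ∫ s in (0:ℝ)..1, a ^ s * b ^ (1 - s) :=
  intervalIntegral.integral_nonneg (by norm_num) fun s _ => by positivity

/-- Kubo–Ando domination of the logarithmic mean by the arithmetic mean: for a faithful
density matrix `π` and Hermitian `A`,
`Tr[A (Aπ + πA)/2] ≥ Tr[A 𝕁(A)] ≥ 0`, all traces being real. -/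
theorem stmt4 {n : ℕ} (π : Matrix (Fin n) (Fin n) ℂ) (hπ : π.PosDef) (htr : π.trace = 1)
    (A : Matrix (Fin n) (Fin n) ℂ) (hA : A.IsHermitian) :
    (A * (((1 : ℂ)/2) • (A * π + π * A))).trace.im = 0 ∧
    (A * Jmean π hπ.1 A).trace.im = 0 ∧
    (A * Jmean π hπ.1 A).trace.re ≤ (A * (((1 : ℂ)/2) • (A * π + π * A))).trace.re ∧
    0 ≤ (A * Jmean π hπ.1 A).trace.re := by
  classical
  set h : π.IsHermitian := hπ.1 with hh
  set U : Matrix (Fin n) (Fin n) ℂ := (h.eigenvectorUnitary : Matrix (Fin n) (Fin n) ℂ) with hUdef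
  set l : Fin n → ℝ := h.eigenvalues with hldef
  have hl : ∀ i, 0 < l i := fun i => hπ.eigenvalues_pos i
  set B : Matrix (Fin n) (Fin n) ℂ := star U * A * U with hBdef
  set c : Fin n → Fin n → ℝ := fun i j => Complex.normSq (B i j) with hcdef
  have hUU : U * star U = 1 := (Matrix.mem_unitaryGroup_iff).mp h.eigenvectorUnitary.2
  have hU'U : star U * U = 1 := (Matrix.mem_unitaryGroup_iff').mp h.eigenvectorUnitary.2
  have hAeq : A = U * B * star U := by
    rw [hBdef]
    calc A = (U * star U) * A * (U * star U) := by rw [hUU, Matrix.one_mul, Matrix.mul_one]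
      _ = U * (star U * A * U) * star U := by noncomm_ring
  have hBH : Bᴴ = B := by
    rw [hBdef, Matrix.star_eq_conjTranspose]
    simp [Matrix.conjTranspose_mul, hA.eq, Matrix.mul_assoc]
  have hBji : ∀ i j, B j i = starRingEnd ℂ (B i j) := by
    intro i j
    have : Bᴴ i j = B i j := by rw [hBH]
    rw [Matrix.conjTranspose_apply] at this
    rw [← this, RCLike.star_def, Complex.conj_conj]
  -- key trace identity
  have cancel : ∀ X : Matrix (Fin n) (Fin n) ℂ, star U * (U * X) = X := fun X => by
    rw [← Matrix.mul_assoc, hU'U, Matrix.one_mul]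
  have key : ∀ d e : Fin n → ℂ,
      (A * (U * diagonal d * star U * (A * (U * diagonal e * star U)))).trace =
        ∑ i, ∑ j, (c i j : ℂ) * (d j * e i) := by
    intro d e
    have step1 : A * (U * diagonal d * star U * (A * (U * diagonal e * star U))) =
        U * (B * diagonal d * (B * diagonal e)) * star U := by
      conv_lhs => rw [hAeq]
      simp only [Matrix.mul_assoc, cancel]
    rw [step1, Matrix.trace_mul_comm, cancel]
    have step2 : (B * diagonal d * (B * diagonal e)).trace =
        ∑ i, ∑ j, B i j * d j * (B j i * e i) := by
      unfold Matrix.trace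
      refine Finset.sum_congr rfl fun i _ => ?_
      rw [Matrix.diag, Matrix.mul_apply]
      refine Finset.sum_congr rfl fun j _ => ?_
      rw [Matrix.mul_diagonal, Matrix.mul_diagonal]
    rw [step2]
    refine Finset.sum_congr rfl fun i _ => Finset.sum_congr rfl fun j _ => ?_
    rw [hBji i j, hcdef]
    have : (Complex.normSq (B i j) : ℂ) = B i j * starRingEnd ℂ (B i j) := by
      rw [Complex.mul_conj]
    rw [this]; ring
  -- spectral theorem for π
  have hsp : π = U * diagonal (fun i => ((l i : ℝ) : ℂ)) * star U := by
    have := h.spectral_theorem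
    rw [Unitary.conjStarAlgAut_apply] at this
    exact this
  -- LHS trace
  have e1 : U * diagonal (fun _ : Fin n => (1:ℂ)) * star U = 1 := by
    rw [diagonal_one, Matrix.mul_one, hUU]
  have t1 : (A * (A * π)).trace = ∑ i, ∑ j, (c i j : ℂ) * ((l i : ℝ) : ℂ) := by
    have := key (fun _ => (1:ℂ)) (fun i => ((l i : ℝ) : ℂ))
    rw [e1, Matrix.one_mul, ← hsp] at this
    rw [this]
    exact Finset.sum_congr rfl fun i _ => Finset.sum_congr rfl fun j _ => by ring
  have t2 : (A * (π * A)).trace = ∑ i, ∑ j, (c i j : ℂ) * ((l j : ℝ) : ℂ) := by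
    have := key (fun i => ((l i : ℝ) : ℂ)) (fun _ => (1:ℂ))
    rw [e1, Matrix.mul_one, ← hsp] at this
    rw [this]
    exact Finset.sum_congr rfl fun i _ => Finset.sum_congr rfl fun j _ => by ring
  set S1 : ℝ := ∑ i, ∑ j, c i j * l i with hS1
  set S2 : ℝ := ∑ i, ∑ j, c i j * l j with hS2
  have hL : (A * (((1 : ℂ)/2) • (A * π + π * A))).trace = (((S1 + S2)/2 : ℝ) : ℂ) := by
    rw [Matrix.mul_smul, Matrix.mul_add, Matrix.trace_smul, Matrix.trace_add, t1, t2,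
      smul_eq_mul, hS1, hS2]
    push_cast
    ring
  -- continuity facts
  have hmc : Continuous fun s : ℝ => mpow π h s := by
    unfold mpow
    exact (continuous_const.matrix_mul ((continuous_pi fun j =>
      Complex.continuous_ofReal.comp (continuous_const.rpow continuous_id
        fun _ => Or.inl (hl j).ne')).matrix_diagonal)).matrix_mul continuous_const
  have hFc : ∀ k i : Fin n,
      Continuous fun s : ℝ => (mpow π h s * A * mpow π h (1 - s)) k i := fun k i =>
    (((hmc.matrix_mul continuous_const).matrix_mul
      (hmc.comp (continuous_const.sub continuous_id))).matrix_elem k i)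
  -- pointwise trace value
  set g : ℝ → ℝ := fun s => ∑ i, ∑ j, c i j * (l j ^ s * l i ^ (1 - s)) with hgdef
  have hpt : ∀ s : ℝ, (∑ i, ∑ k, A i k * (mpow π h s * A * mpow π h (1 - s)) k i) =
      ((g s : ℝ) : ℂ) := by
    intro s
    have h1 : (∑ i, ∑ k, A i k * (mpow π h s * A * mpow π h (1 - s)) k i) =
        (A * (mpow π h s * A * mpow π h (1 - s))).trace := by
      unfold Matrix.trace
      exact Finset.sum_congr rfl fun i _ => by rw [Matrix.diag, Matrix.mul_apply]
    have h2 : A * (mpow π h s * A * mpow π h (1 - s)) =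
        A * (mpow π h s * (A * mpow π h (1 - s))) := by rw [Matrix.mul_assoc]
    have h3 : mpow π h s = U * diagonal (fun i => ((l i ^ s : ℝ) : ℂ)) * star U := rfl
    have h4 : mpow π h (1 - s) = U * diagonal (fun i => ((l i ^ (1-s) : ℝ) : ℂ)) * star U := rfl
    rw [h1, h2, h3, h4, key (fun i => ((l i ^ s : ℝ) : ℂ)) (fun i => ((l i ^ (1-s) : ℝ) : ℂ))]
    rw [hgdef]
    push_cast
    rfl
  -- Jmean trace as integral
  have hJ : (A * Jmean π h A).trace = ((∫ s in (0:ℝ)..1, g s : ℝ) : ℂ) := by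
    have hJentry : ∀ k i : Fin n, Jmean π h A k i =
        ∫ s in (0:ℝ)..1, (mpow π h s * A * mpow π h (1 - s)) k i := fun k i => rfl
    have htr' : (A * Jmean π h A).trace = ∑ i, ∑ k, A i k * Jmean π h A k i := by
      unfold Matrix.trace
      exact Finset.sum_congr rfl fun i _ => by rw [Matrix.diag, Matrix.mul_apply]
    rw [htr']
    have step : (∑ i, ∑ k, A i k * Jmean π h A k i) =
        ∫ s in (0:ℝ)..1, ∑ i, ∑ k, A i k * (mpow π h s * A * mpow π h (1 - s)) k i := by
      rw [intervalIntegral.integral_finset_sum (fun i _ =>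
        ((continuous_finset_sum _ fun k _ =>
          (hFc k i).const_mul (A i k)).intervalIntegrable _ _))]
      refine Finset.sum_congr rfl fun i _ => ?_
      rw [intervalIntegral.integral_finset_sum (fun k _ =>
        ((hFc k i).const_mul (A i k)).intervalIntegrable _ _)]
      refine Finset.sum_congr rfl fun k _ => ?_
      rw [hJentry, intervalIntegral.integral_const_mul]
    rw [step]
    have : (fun s : ℝ => ∑ i, ∑ k, A i k * (mpow π h s * A * mpow π h (1 - s)) k i) =
        fun s => ((g s : ℝ) : ℂ) := funext hpt
    rw [this, intervalIntegral.integral_ofReal]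
  -- integral of g
  have hcnn : ∀ i j, 0 ≤ c i j := fun i j => Complex.normSq_nonneg _
  have hgint : (∫ s in (0:ℝ)..1, g s) =
      ∑ i, ∑ j, c i j * ∫ s in (0:ℝ)..1, l j ^ s * l i ^ (1 - s) := by
    rw [hgdef]
    rw [intervalIntegral.integral_finset_sum (fun i _ =>
      ((continuous_finset_sum _ fun j _ =>
        (contRpowMul (hl j) (hl i)).const_mul (c i j)).intervalIntegrable _ _))]
    refine Finset.sum_congr rfl fun i _ => ?_
    rw [intervalIntegral.integral_finset_sum (fun j _ =>
      ((contRpowMul (hl j) (hl i)).const_mul (c i j)).intervalIntegrable _ _)]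
    exact Finset.sum_congr rfl fun j _ => intervalIntegral.integral_const_mul _ _
  have hupper : (∫ s in (0:ℝ)..1, g s) ≤ (S1 + S2)/2 := by
    rw [hgint]
    have hb : (∑ i, ∑ j, c i j * ∫ s in (0:ℝ)..1, l j ^ s * l i ^ (1 - s)) ≤
        ∑ i, ∑ j, c i j * ((l j + l i)/2) := by
      refine Finset.sum_le_sum fun i _ => Finset.sum_le_sum fun j _ =>
        mul_le_mul_of_nonneg_left (logMeanLe (hl j) (hl i)) (hcnn i j)
    refine hb.trans (le_of_eq ?_)
    calc ∑ i, ∑ j, c i j * ((l j + l i) / 2)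
        = ∑ i, ((∑ j, c i j * l i) + ∑ j, c i j * l j) / 2 := by
          refine Finset.sum_congr rfl fun i _ => ?_
          rw [← Finset.sum_add_distrib, Finset.sum_div]
          exact Finset.sum_congr rfl fun j _ => by ring
      _ = (S1 + S2) / 2 := by
          rw [hS1, hS2, ← Finset.sum_div, Finset.sum_add_distrib]
  have hlower : 0 ≤ (∫ s in (0:ℝ)..1, g s) := by
    rw [hgint]
    exact Finset.sum_nonneg fun i _ => Finset.sum_nonneg fun j _ =>
      mul_nonneg (hcnn i j) (logMeanNonneg (hl j) (hl i))
  refine ⟨?_, ?_, ?_, ?_⟩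
  · rw [hL]; exact Complex.ofReal_im _
  · rw [hJ]; exact Complex.ofReal_im _
  · rw [hL, hJ, Complex.ofReal_re, Complex.ofReal_re]; exact hupper
  · rw [hJ, Complex.ofReal_re]; exact hlower
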